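/- Let (Q_i) be positive with 0 < c ≤ Q_i/Q_{i+1} ≤ C < ∞, and a_i ≤ C₂ i, b_i ≤ C₂ i. Let L be the linearized Becker–Döring operator given weakly by ∑ Q_i (Lh)_i φ_i = ∑ a_i Q_i Q_1 (h_1 + h_i - h_{i+1})(φ_{i+1} - φ_i - φ_1). Then for every m ≥ 0 there exists C_m such that ∑ Q_i i^{1+m} |(Lh)_i| ≤ C_m ∑ Q_i i^{2+m} |h_i| for all sequences h with finite right-hand side; i.e., ‖Lh‖_{X_{1+m}} ≤ C_m ‖h‖_{X_{2+m}}. -/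

import Mathlib

/-- The linearized Becker–Döring operator `L`, in strong form, obtained from the weak form
`∑ Q_i (Lh)_i φ_i = ∑_{i≥1} a_i Q_i Q_1 (h_1 + h_i - h_{i+1})(φ_{i+1} - φ_i - φ_1)`. -/
noncomputable def BDLop (a Q : ℕ → ℝ) (h : ℕ → ℝ) : ℕ → ℝ := fun i =>
  if i = 0 then 0
  else if i = 1 then
    (-(a 1 * Q 1 * Q 1 * (h 1 + h 1 - h 2))
      - ∑' j : ℕ, if 1 ≤ j then a j * Q j * Q 1 * (h 1 + h j - h (j + 1)) else 0) / Q 1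
  else
    (a (i - 1) * Q (i - 1) * Q 1 * (h 1 + h (i - 1) - h i)
      - a i * Q i * Q 1 * (h 1 + h i - h (i + 1))) / Q i

namespace BDaux

/-- The flux `F_j = a_j Q_j Q_1 (h_1 + h_j - h_{j+1})`. -/
noncomputable def Fv (a Q h : ℕ → ℝ) (j : ℕ) : ℝ := a j * Q j * Q 1 * (h 1 + h j - h (j + 1))

/-- The `h 1`-part of the flux. -/
noncomputable def Av (a Q h : ℕ → ℝ) (j : ℕ) : ℝ := a j * Q j * Q 1 * h 1

/-- The difference part of the flux. -/
noncomputable def Bv (a Q h : ℕ → ℝ) (j : ℕ) : ℝ := a j * Q j * Q 1 * (h j - h (j + 1))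

lemma Fv_split (a Q h : ℕ → ℝ) (j : ℕ) : Fv a Q h j = Av a Q h j + Bv a Q h j := by
  simp only [Fv, Av, Bv]; ring

lemma BDLop_one (a Q h : ℕ → ℝ) :
    BDLop a Q h 1 =
      (-(Fv a Q h 1) - ∑' j : ℕ, if 1 ≤ j then Fv a Q h j else 0) / Q 1 := by
  simp only [BDLop, Fv]
  norm_num

lemma BDLop_ge2 (a Q h : ℕ → ℝ) (i : ℕ) (hi : 2 ≤ i) :
    BDLop a Q h i = (Fv a Q h (i - 1) - Fv a Q h i) / Q i := by
  have h0 : ¬ i = 0 := by omega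
  have h1 : ¬ i = 1 := by omega
  have h2 : i - 1 + 1 = i := by omega
  simp only [BDLop, Fv, if_neg h0, if_neg h1, h2]

end BDaux

open BDaux in
/-- Moment-loss boundedness of the linearized Becker–Döring operator:
`‖Lh‖_{X_{1+m}} ≤ C_m ‖h‖_{X_{2+m}}`. -/
theorem BDLop_moment_bound (a b Q : ℕ → ℝ) (C₂ c C : ℝ)
    (hQ : ∀ i, 1 ≤ i → 0 < Q i) (hc : 0 < c) (hC : 0 < C)
    (hQratio : ∀ i, 1 ≤ i → c ≤ Q i / Q (i + 1) ∧ Q i / Q (i + 1) ≤ C)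
    (ha : ∀ i, 1 ≤ i → 0 < a i ∧ a i ≤ C₂ * i)
    (hb : ∀ i, 1 ≤ i → 0 < b i ∧ b i ≤ C₂ * i)
    (m : ℝ) (hm : 0 ≤ m) :
    ∃ Cm : ℝ, 0 < Cm ∧ ∀ h : ℕ → ℝ,
      Summable (fun i => Q i * (i : ℝ) ^ (2 + m) * |h i|) →
      (∑' i : ℕ, Q i * (i : ℝ) ^ (1 + m) * |BDLop a Q h i|) ≤
        Cm * ∑' i : ℕ, Q i * (i : ℝ) ^ (2 + m) * |h i| := by
  have hQ1 : 0 < Q 1 := hQ 1 le_rfl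
  have ha1 := ha 1 le_rfl
  have hC₂ : 0 < C₂ := by
    have h2 := ha1.2
    push_cast at h2
    linarith [ha1.1]
  set K : ℝ := C₂ * Q 1 * (1 + C) with hKdef
  have hKpos : 0 < K := by
    apply mul_pos (mul_pos hC₂ hQ1); linarith
  have h2m : (0:ℝ) < (2:ℝ) ^ (1 + m) := Real.rpow_pos_of_pos two_pos _
  set α : ℕ → ℝ := fun j => if 1 ≤ j then a j * Q j else 0 with hαdef
  have hαnn : ∀ j, 0 ≤ α j := by
    intro j
    simp only [hαdef]
    split
    · exact (mul_pos (ha j ‹_›).1 (hQ j ‹_›)).le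
    · exact le_refl 0
  set Sv : ℝ := ∑' j, α j with hSvdef
  have hSvnn : 0 ≤ Sv := tsum_nonneg hαnn
  set g : ℕ → ℝ :=
    fun i => if 2 ≤ i then (i : ℝ) ^ (1 + m) * |a (i - 1) * Q (i - 1) - a i * Q i| else 0
    with hgdef
  have hgnn : ∀ i, 0 ≤ g i := by
    intro i
    simp only [hgdef]
    split
    · exact mul_nonneg (Real.rpow_nonneg (Nat.cast_nonneg i) _) (abs_nonneg _)
    · exact le_refl 0
  set Dv : ℝ := ∑' i, g i with hDvdef
  have hDvnn : 0 ≤ Dv := tsum_nonneg hgnn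
  have ha1Q1 : 0 < a 1 * Q 1 := mul_pos ha1.1 hQ1
  have h3K : 0 < (3 + (2:ℝ) ^ (1 + m)) * K := mul_pos (by linarith) hKpos
  refine ⟨1 + a 1 * Q 1 + Sv + Dv + (3 + (2:ℝ) ^ (1 + m)) * K, by linarith, ?_⟩
  intro h hR
  set u : ℕ → ℝ := fun i => Q i * (i : ℝ) ^ (2 + m) * |h i| with huDef
  have hRu : Summable u := by simpa only [huDef] using hR
  have hu0 : u 0 = 0 := by
    simp [huDef, Real.zero_rpow (show (2:ℝ) + m ≠ 0 by linarith)]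
  have hunn : ∀ i, 0 ≤ u i := by
    intro i
    match i with
    | 0 => rw [hu0]
    | Nat.succ n =>
      exact mul_nonneg (mul_nonneg (hQ _ (Nat.succ_le_succ (Nat.zero_le n))).le
        (Real.rpow_nonneg (Nat.cast_nonneg _) _)) (abs_nonneg _)
  set R : ℝ := ∑' i, u i with hRdef
  have hRnn : 0 ≤ R := tsum_nonneg hunn
  have hule : ∀ i, u i ≤ R := fun i => Summable.le_tsum hRu i (fun j _ => hunn j)
  have hQ1h1 : Q 1 * |h 1| ≤ R := by
    have h1 := hule 1
    simpa [huDef, Real.one_rpow] using h1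
  have husucc : Summable (fun j => u (j + 1)) := (summable_nat_add_iff 1).2 hRu
  have htsucc : ∑' j, u (j + 1) ≤ R := by
    have h0 := Summable.tsum_eq_zero_add hRu
    rw [← hRdef] at h0
    linarith [h0, hu0.ge, hu0.le]
  -- the weighted B-part
  set GB : ℕ → ℝ := fun j => if 1 ≤ j then (j : ℝ) ^ (1 + m) * |Bv a Q h j| else 0 with hGBdef
  have hGBnn : ∀ j, 0 ≤ GB j := by
    intro j
    simp only [hGBdef]
    split
    · exact mul_nonneg (Real.rpow_nonneg (Nat.cast_nonneg j) _) (abs_nonneg _)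
    · exact le_refl 0
  have hGBle : ∀ j, GB j ≤ C₂ * Q 1 * (u j + C * u (j + 1)) := by
    intro j
    have hu1 : 0 ≤ u (j + 1) := hunn _
    have hu0' : 0 ≤ u j := hunn _
    by_cases hj : 1 ≤ j
    · have hQj := hQ j hj
      have hQj1 := hQ (j + 1) (by omega)
      have haj := ha j hj
      have hcast : (1:ℝ) ≤ (j:ℝ) := by exact_mod_cast hj
      have hjpos : (0:ℝ) < (j:ℝ) := by linarith
      have hQle : Q j ≤ C * Q (j + 1) := by
        have h2 := (hQratio j hj).2
        rw [div_le_iff₀ hQj1] at h2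
        linarith
      have hpow2 : (j:ℝ) ^ (1 + m) * (j:ℝ) = (j:ℝ) ^ (2 + m) := by
        have h1 : (j:ℝ) ^ ((1 + m) + 1) = (j:ℝ) ^ (1 + m) * (j:ℝ) ^ (1:ℝ) :=
          Real.rpow_add hjpos _ _
        rw [Real.rpow_one] at h1
        rw [← h1]
        congr 1
        ring
      have hpowle : (j:ℝ) ^ (2 + m) ≤ ((j:ℝ) + 1) ^ (2 + m) :=
        Real.rpow_le_rpow hjpos.le (by linarith) (by linarith)
      have hxnn : 0 ≤ (j:ℝ) ^ (1 + m) := Real.rpow_nonneg hjpos.le _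
      have hpos3 : 0 < a j * Q j * Q 1 := mul_pos (mul_pos haj.1 hQj) hQ1
      have habs : |Bv a Q h j| ≤ a j * Q j * Q 1 * (|h j| + |h (j + 1)|) :=
        calc |Bv a Q h j| = |a j * Q j * Q 1| * |h j - h (j + 1)| := by
              rw [Bv, abs_mul]
          _ = (a j * Q j * Q 1) * |h j - h (j + 1)| := by rw [abs_of_pos hpos3]
          _ ≤ (a j * Q j * Q 1) * (|h j| + |h (j + 1)|) :=
              mul_le_mul_of_nonneg_left (abs_sub _ _) hpos3.le
      have hGBj : GB j = (j:ℝ) ^ (1 + m) * |Bv a Q h j| := by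
        simp only [hGBdef]; rw [if_pos hj]
      rw [hGBj]
      have key : (j:ℝ) ^ (1 + m) * a j ≤ C₂ * (j:ℝ) ^ (2 + m) := by
        have h2 : a j ≤ C₂ * (j:ℝ) := haj.2
        calc (j:ℝ) ^ (1 + m) * a j ≤ (j:ℝ) ^ (1 + m) * (C₂ * (j:ℝ)) :=
              mul_le_mul_of_nonneg_left h2 hxnn
          _ = C₂ * ((j:ℝ) ^ (1 + m) * (j:ℝ)) := by ring
          _ = C₂ * (j:ℝ) ^ (2 + m) := by rw [hpow2]
      have t1 : (j:ℝ) ^ (1 + m) * a j * (Q j * Q 1 * |h j|) ≤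
          C₂ * (j:ℝ) ^ (2 + m) * (Q j * Q 1 * |h j|) :=
        mul_le_mul_of_nonneg_right key
          (mul_nonneg (mul_nonneg hQj.le hQ1.le) (abs_nonneg _))
      have t2a : Q j * (j:ℝ) ^ (2 + m) ≤ (C * Q (j + 1)) * ((j:ℝ) + 1) ^ (2 + m) :=
        mul_le_mul hQle hpowle (Real.rpow_nonneg hjpos.le _) (mul_nonneg hC.le hQj1.le)
      have t2 : (j:ℝ) ^ (1 + m) * a j * (Q j * Q 1 * |h (j + 1)|) ≤
          C₂ * ((C * Q (j + 1)) * ((j:ℝ) + 1) ^ (2 + m)) * (Q 1 * |h (j + 1)|) := by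
        have s1 : (j:ℝ) ^ (1 + m) * a j * (Q j * Q 1 * |h (j + 1)|) ≤
            C₂ * (j:ℝ) ^ (2 + m) * (Q j * Q 1 * |h (j + 1)|) :=
          mul_le_mul_of_nonneg_right key
            (mul_nonneg (mul_nonneg hQj.le hQ1.le) (abs_nonneg _))
        have s2 : C₂ * (j:ℝ) ^ (2 + m) * (Q j * Q 1 * |h (j + 1)|) =
            C₂ * (Q j * (j:ℝ) ^ (2 + m)) * (Q 1 * |h (j + 1)|) := by ring
        have s3 : C₂ * (Q j * (j:ℝ) ^ (2 + m)) * (Q 1 * |h (j + 1)|) ≤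
            C₂ * ((C * Q (j + 1)) * ((j:ℝ) + 1) ^ (2 + m)) * (Q 1 * |h (j + 1)|) :=
          mul_le_mul_of_nonneg_right (mul_le_mul_of_nonneg_left t2a hC₂.le)
            (mul_nonneg hQ1.le (abs_nonneg _))
        calc (j:ℝ) ^ (1 + m) * a j * (Q j * Q 1 * |h (j + 1)|) ≤
              C₂ * (j:ℝ) ^ (2 + m) * (Q j * Q 1 * |h (j + 1)|) := s1
          _ = C₂ * (Q j * (j:ℝ) ^ (2 + m)) * (Q 1 * |h (j + 1)|) := s2
          _ ≤ C₂ * ((C * Q (j + 1)) * ((j:ℝ) + 1) ^ (2 + m)) * (Q 1 * |h (j + 1)|) := s3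
      have hcast1 : ((j + 1 : ℕ) : ℝ) = (j:ℝ) + 1 := by push_cast; ring
      have hu_j : u j = Q j * (j:ℝ) ^ (2 + m) * |h j| := by simp only [huDef]
      have hu_j1 : u (j + 1) = Q (j + 1) * ((j:ℝ) + 1) ^ (2 + m) * |h (j + 1)| := by
        simp only [huDef]; rw [hcast1]
      calc (j:ℝ) ^ (1 + m) * |Bv a Q h j| ≤
            (j:ℝ) ^ (1 + m) * (a j * Q j * Q 1 * (|h j| + |h (j + 1)|)) :=
            mul_le_mul_of_nonneg_left habs hxnn
        _ = (j:ℝ) ^ (1 + m) * a j * (Q j * Q 1 * |h j|) +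
            (j:ℝ) ^ (1 + m) * a j * (Q j * Q 1 * |h (j + 1)|) := by ring
        _ ≤ C₂ * (j:ℝ) ^ (2 + m) * (Q j * Q 1 * |h j|) +
            C₂ * ((C * Q (j + 1)) * ((j:ℝ) + 1) ^ (2 + m)) * (Q 1 * |h (j + 1)|) :=
            add_le_add t1 t2
        _ = C₂ * Q 1 * (u j + C * u (j + 1)) := by rw [hu_j, hu_j1]; ring
    · have hz : GB j = 0 := by simp only [hGBdef]; rw [if_neg hj]
      rw [hz]
      have h1 : 0 ≤ C * u (j + 1) := mul_nonneg hC.le hu1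
      have h2 : 0 ≤ C₂ * Q 1 := (mul_pos hC₂ hQ1).le
      exact mul_nonneg h2 (by linarith)
  have hmaj : Summable (fun j => C₂ * Q 1 * (u j + C * u (j + 1))) :=
    ((hRu.add (husucc.mul_left C)).mul_left _)
  have hGBsum : Summable GB := Summable.of_nonneg_of_le hGBnn hGBle hmaj
  have hGBtsum : ∑' j, GB j ≤ K * R := by
    have h1 : ∑' j, GB j ≤ ∑' j, C₂ * Q 1 * (u j + C * u (j + 1)) :=
      Summable.tsum_le_tsum hGBle hGBsum hmaj
    have h2 : ∑' j, C₂ * Q 1 * (u j + C * u (j + 1)) =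
        C₂ * Q 1 * (R + C * ∑' j, u (j + 1)) := by
      rw [tsum_mul_left, Summable.tsum_add hRu (husucc.mul_left C), tsum_mul_left, ← hRdef]
    have h3 : C₂ * Q 1 * (R + C * ∑' j, u (j + 1)) ≤ C₂ * Q 1 * (R + C * R) := by
      apply mul_le_mul_of_nonneg_left _ (mul_pos hC₂ hQ1).le
      have := mul_le_mul_of_nonneg_left htsucc hC.le
      linarith
    have h4 : C₂ * Q 1 * (R + C * R) = K * R := by rw [hKdef]; ring
    linarith
  -- shifted B-part
  set GB1 : ℕ → ℝ := fun i => if 2 ≤ i then (i : ℝ) ^ (1 + m) * |Bv a Q h (i - 1)| else 0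
    with hGB1def
  have hGB1nn : ∀ i, 0 ≤ GB1 i := by
    intro i
    simp only [hGB1def]
    split
    · exact mul_nonneg (Real.rpow_nonneg (Nat.cast_nonneg i) _) (abs_nonneg _)
    · exact le_refl 0
  have hGB1shift : ∀ j, GB1 (j + 1) ≤ (2:ℝ) ^ (1 + m) * GB j := by
    intro j
    by_cases hj : 1 ≤ j
    · have h2j : 2 ≤ j + 1 := by omega
      have hcast : (1:ℝ) ≤ (j:ℝ) := by exact_mod_cast hj
      have e0 : j + 1 - 1 = j := by omega
      have e1 : GB1 (j + 1) = ((j + 1 : ℕ) : ℝ) ^ (1 + m) * |Bv a Q h j| := by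
        simp only [hGB1def]; rw [if_pos h2j, e0]
      have e2 : ((j + 1 : ℕ) : ℝ) ^ (1 + m) ≤ (2:ℝ) ^ (1 + m) * (j:ℝ) ^ (1 + m) := by
        rw [← Real.mul_rpow (by norm_num) (by linarith)]
        apply Real.rpow_le_rpow (Nat.cast_nonneg _) _ (by linarith)
        push_cast
        linarith
      have e3 : GB j = (j:ℝ) ^ (1 + m) * |Bv a Q h j| := by
        simp only [hGBdef]; rw [if_pos hj]
      rw [e1, e3]
      calc ((j + 1 : ℕ) : ℝ) ^ (1 + m) * |Bv a Q h j| ≤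
            ((2:ℝ) ^ (1 + m) * (j:ℝ) ^ (1 + m)) * |Bv a Q h j| :=
            mul_le_mul_of_nonneg_right e2 (abs_nonneg _)
        _ = (2:ℝ) ^ (1 + m) * ((j:ℝ) ^ (1 + m) * |Bv a Q h j|) := by ring
    · have hj0 : j = 0 := by omega
      subst hj0
      have e1 : GB1 1 = 0 := by simp only [hGB1def]; rw [if_neg (by omega)]
      have e2 : GB 0 = 0 := by simp only [hGBdef]; rw [if_neg (by omega)]
      rw [e1, e2, mul_zero]
  have hGB1sum : Summable GB1 := by
    apply (summable_nat_add_iff 1).mp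
    exact Summable.of_nonneg_of_le (fun j => hGB1nn _) hGB1shift (hGBsum.mul_left _)
  have hGB1tsum : ∑' i, GB1 i ≤ (2:ℝ) ^ (1 + m) * ∑' j, GB j := by
    have h0 := Summable.tsum_eq_zero_add hGB1sum
    have h1 : GB1 0 = 0 := by simp only [hGB1def]; rw [if_neg (by omega)]
    have h2 : ∑' j, GB1 (j + 1) ≤ ∑' j, (2:ℝ) ^ (1 + m) * GB j :=
      Summable.tsum_le_tsum hGB1shift ((summable_nat_add_iff 1).mpr hGB1sum) (hGBsum.mul_left _)
    rw [tsum_mul_left] at h2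
    rw [h0, h1]
    linarith
  -- B-part restricted to i ≥ 2
  set GBe : ℕ → ℝ := fun i => if 2 ≤ i then (i : ℝ) ^ (1 + m) * |Bv a Q h i| else 0 with hGBedef
  have hGBenn : ∀ i, 0 ≤ GBe i := by
    intro i
    simp only [hGBedef]
    split
    · exact mul_nonneg (Real.rpow_nonneg (Nat.cast_nonneg i) _) (abs_nonneg _)
    · exact le_refl 0
  have hGBele : ∀ i, GBe i ≤ GB i := by
    intro i
    by_cases h2 : 2 ≤ i
    · simp only [hGBedef, hGBdef]
      rw [if_pos h2, if_pos (by omega : 1 ≤ i)]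
    · have : GBe i = 0 := by simp only [hGBedef]; rw [if_neg h2]
      rw [this]; exact hGBnn i
  have hGBesum : Summable GBe := Summable.of_nonneg_of_le hGBenn hGBele hGBsum
  have hGBetsum : ∑' i, GBe i ≤ ∑' j, GB j := Summable.tsum_le_tsum hGBele hGBesum hGBsum
  -- A-part differences
  set GA : ℕ → ℝ := fun i =>
      if 2 ≤ i then (i : ℝ) ^ (1 + m) * |Av a Q h (i - 1) - Av a Q h i| else 0 with hGAdef
  have hGAnn : ∀ i, 0 ≤ GA i := by
    intro i
    simp only [hGAdef]
    split
    · exact mul_nonneg (Real.rpow_nonneg (Nat.cast_nonneg i) _) (abs_nonneg _)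
    · exact le_refl 0
  have hGAg : ∀ i, GA i = (Q 1 * |h 1|) * g i := by
    intro i
    simp only [hGAdef, hgdef]
    by_cases h2 : 2 ≤ i
    · rw [if_pos h2, if_pos h2]
      have e : Av a Q h (i - 1) - Av a Q h i =
          (a (i - 1) * Q (i - 1) - a i * Q i) * (Q 1 * h 1) := by
        simp only [Av]; ring
      rw [e, abs_mul, abs_mul, abs_of_pos hQ1]
      ring
    · rw [if_neg h2, if_neg h2, mul_zero]
  -- the whole left-hand side
  set L : ℕ → ℝ := fun i => Q i * (i : ℝ) ^ (1 + m) * |BDLop a Q h i| with hLdef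
  have hL0 : L 0 = 0 := by
    simp only [hLdef, BDLop, if_pos rfl]
    simp
  have hLnn : ∀ i, 0 ≤ L i := by
    intro i
    match i with
    | 0 => rw [hL0]
    | Nat.succ n =>
      exact mul_nonneg (mul_nonneg (hQ _ (Nat.succ_le_succ (Nat.zero_le n))).le
        (Real.rpow_nonneg (Nat.cast_nonneg _) _)) (abs_nonneg _)
  have hL2 : ∀ i, 2 ≤ i → L i = (i : ℝ) ^ (1 + m) * |Fv a Q h (i - 1) - Fv a Q h i| := by
    intro i hi
    have hQi : 0 < Q i := hQ i (by omega)
    simp only [hLdef]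
    rw [BDLop_ge2 a Q h i hi, abs_div, abs_of_pos hQi]
    field_simp
  by_cases hLS : Summable L
  · -- the summable case: estimate everything
    have hGAfacts : Summable GA ∧ ∑' i, GA i ≤ Dv * R := by
      by_cases hh1 : h 1 = 0
      · have hz : ∀ i, GA i = 0 := by
          intro i; rw [hGAg i, hh1]; simp
        have hze : GA = fun _ => 0 := funext hz
        constructor
        · rw [hze]; exact summable_zero
        · rw [hze, tsum_zero]
          exact mul_nonneg hDvnn hRnn
      · by_cases hgs : Summable g
        · have hGAe : GA = fun i => (Q 1 * |h 1|) * g i := funext hGAg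
          have hsum : Summable GA := by rw [hGAe]; exact hgs.mul_left _
          refine ⟨hsum, ?_⟩
          have ht : ∑' i, GA i = (Q 1 * |h 1|) * Dv := by
            rw [hGAe, tsum_mul_left, ← hDvdef]
          rw [ht]
          calc (Q 1 * |h 1|) * Dv ≤ R * Dv := mul_le_mul_of_nonneg_right hQ1h1 hDvnn
            _ = Dv * R := mul_comm _ _
        · exfalso
          set L2 : ℕ → ℝ := fun i => if 2 ≤ i then L i else 0 with hL2def
          have hL2nn : ∀ i, 0 ≤ L2 i := by
            intro i
            simp only [hL2def]
            split
            · exact hLnn i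
            · exact le_refl 0
          have hL2le : ∀ i, L2 i ≤ L i := by
            intro i
            simp only [hL2def]
            split
            · exact le_refl _
            · exact hLnn i
          have hL2sum : Summable L2 := Summable.of_nonneg_of_le hL2nn hL2le hLS
          have hmaj2 : ∀ i, GA i ≤ L2 i + (GB1 i + GBe i) := by
            intro i
            by_cases h2 : 2 ≤ i
            · have hxnn : 0 ≤ (i:ℝ) ^ (1 + m) := Real.rpow_nonneg (Nat.cast_nonneg i) _
              have hsplit : Av a Q h (i - 1) - Av a Q h i =
                  (Fv a Q h (i - 1) - Fv a Q h i) - (Bv a Q h (i - 1) - Bv a Q h i) := by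
                rw [Fv_split, Fv_split]; ring
              have htri : |Av a Q h (i - 1) - Av a Q h i| ≤
                  |Fv a Q h (i - 1) - Fv a Q h i| + (|Bv a Q h (i - 1)| + |Bv a Q h i|) := by
                rw [hsplit]
                refine le_trans (abs_sub _ _) ?_
                exact add_le_add le_rfl (abs_sub _ _)
              have eGA : GA i = (i:ℝ) ^ (1 + m) * |Av a Q h (i - 1) - Av a Q h i| := by
                simp only [hGAdef]; rw [if_pos h2]
              have eL2 : L2 i = (i:ℝ) ^ (1 + m) * |Fv a Q h (i - 1) - Fv a Q h i| := by
                simp only [hL2def]; rw [if_pos h2, hL2 i h2]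
              have eGB1 : GB1 i = (i:ℝ) ^ (1 + m) * |Bv a Q h (i - 1)| := by
                simp only [hGB1def]; rw [if_pos h2]
              have eGBe : GBe i = (i:ℝ) ^ (1 + m) * |Bv a Q h i| := by
                simp only [hGBedef]; rw [if_pos h2]
              rw [eGA, eL2, eGB1, eGBe]
              calc (i:ℝ) ^ (1 + m) * |Av a Q h (i - 1) - Av a Q h i| ≤
                    (i:ℝ) ^ (1 + m) * (|Fv a Q h (i - 1) - Fv a Q h i| +
                      (|Bv a Q h (i - 1)| + |Bv a Q h i|)) :=
                    mul_le_mul_of_nonneg_left htri hxnn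
                _ = (i:ℝ) ^ (1 + m) * |Fv a Q h (i - 1) - Fv a Q h i| +
                    ((i:ℝ) ^ (1 + m) * |Bv a Q h (i - 1)| +
                     (i:ℝ) ^ (1 + m) * |Bv a Q h i|) := by ring
            · have hz : GA i = 0 := by simp only [hGAdef]; rw [if_neg h2]
              rw [hz]
              have := hL2nn i
              have := hGB1nn i
              have := hGBenn i
              linarith
          have hGAsum : Summable GA :=
            Summable.of_nonneg_of_le hGAnn hmaj2 (hL2sum.add (hGB1sum.add hGBesum))
          apply hgs
          have hq : (Q 1 * |h 1|) ≠ 0 :=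
            ne_of_gt (mul_pos hQ1 (abs_pos.mpr hh1))
          have hGAe : GA = fun i => (Q 1 * |h 1|) * g i := funext hGAg
          rw [hGAe] at hGAsum
          exact (summable_mul_left_iff hq).mp hGAsum
    -- the inner tsum (value of the weak-form pairing at φ = e₁)
    set Fi : ℕ → ℝ := fun j => if 1 ≤ j then Fv a Q h j else 0 with hFidef
    have hTbound : |∑' j, Fi j| ≤ (Sv + K) * R := by
      by_cases hFs : Summable Fi
      · set Ai : ℕ → ℝ := fun j => if 1 ≤ j then Av a Q h j else 0 with hAidef
        set Bi : ℕ → ℝ := fun j => if 1 ≤ j then Bv a Q h j else 0 with hBidef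
        have hFAB : Fi = fun j => Ai j + Bi j := by
          funext j
          simp only [hFidef, hAidef, hBidef]
          by_cases hj : 1 ≤ j
          · rw [if_pos hj, if_pos hj, if_pos hj]; exact Fv_split a Q h j
          · rw [if_neg hj, if_neg hj, if_neg hj, add_zero]
        have hBiabs_le : ∀ j, |Bi j| ≤ GB j := by
          intro j
          by_cases hj : 1 ≤ j
          · have eB : Bi j = Bv a Q h j := by simp only [hBidef]; rw [if_pos hj]
            have eG : GB j = (j:ℝ) ^ (1 + m) * |Bv a Q h j| := by
              simp only [hGBdef]; rw [if_pos hj]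
            rw [eB, eG]
            have hone : (1:ℝ) ≤ (j:ℝ) ^ (1 + m) :=
              Real.one_le_rpow (by exact_mod_cast hj) (by linarith)
            nlinarith [abs_nonneg (Bv a Q h j)]
          · have eB : Bi j = 0 := by simp only [hBidef]; rw [if_neg hj]
            rw [eB, abs_zero]; exact hGBnn j
        have hBiabssum : Summable (fun j => |Bi j|) :=
          Summable.of_nonneg_of_le (fun j => abs_nonneg _) hBiabs_le hGBsum
        have hBisum : Summable Bi := summable_abs_iff.mp hBiabssum
        have hBiabs_tsum : ∑' j, |Bi j| ≤ K * R :=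
          le_trans (Summable.tsum_le_tsum hBiabs_le hBiabssum hGBsum) hGBtsum
        have hAisum : Summable Ai := by
          have e : Ai = fun j => Fi j - Bi j := by
            funext j; rw [hFAB]; ring
          rw [e]; exact hFs.sub hBisum
        have hAiabssum : Summable (fun j => |Ai j|) := summable_abs_iff.mpr hAisum
        have hAiabs_tsum : ∑' j, |Ai j| ≤ Sv * R := by
          by_cases hh1 : h 1 = 0
          · have hz : ∀ j, |Ai j| = 0 := by
              intro j
              simp only [hAidef, Av, hh1]
              split <;> simp
            calc ∑' j, |Ai j| = ∑' _ : ℕ, (0:ℝ) := tsum_congr hz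
              _ = 0 := tsum_zero
              _ ≤ Sv * R := mul_nonneg hSvnn hRnn
          · have heq : ∀ j, |Ai j| = (Q 1 * |h 1|) * α j := by
              intro j
              by_cases hj : 1 ≤ j
              · have eA : Ai j = Av a Q h j := by simp only [hAidef]; rw [if_pos hj]
                have eα : α j = a j * Q j := by simp only [hαdef]; rw [if_pos hj]
                have hpos : 0 < a j * Q j := mul_pos (ha j hj).1 (hQ j hj)
                rw [eA, eα, show Av a Q h j = (a j * Q j) * (Q 1 * h 1) by
                  simp only [Av]; ring, abs_mul, abs_of_pos hpos, abs_mul, abs_of_pos hQ1]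
                ring
              · have eA : Ai j = 0 := by simp only [hAidef]; rw [if_neg hj]
                have eα : α j = 0 := by simp only [hαdef]; rw [if_neg hj]
                rw [eA, eα, abs_zero, mul_zero]
            calc ∑' j, |Ai j| = ∑' j, (Q 1 * |h 1|) * α j := tsum_congr heq
              _ = (Q 1 * |h 1|) * Sv := by rw [tsum_mul_left, ← hSvdef]
              _ ≤ R * Sv := mul_le_mul_of_nonneg_right hQ1h1 hSvnn
              _ = Sv * R := mul_comm _ _
        have habs : |∑' j, Fi j| ≤ ∑' j, |Fi j| := by
          have hn : Summable (fun j => ‖Fi j‖) := by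
            simpa only [Real.norm_eq_abs] using summable_abs_iff.mpr hFs
          have := norm_tsum_le_tsum_norm hn
          simpa only [Real.norm_eq_abs] using this
        have hFile : ∀ j, |Fi j| ≤ |Ai j| + |Bi j| := by
          intro j; rw [hFAB]; exact abs_add_le _ _
        have hFi_tsum : ∑' j, |Fi j| ≤ Sv * R + K * R := by
          have hsum : Summable (fun j => |Ai j| + |Bi j|) := hAiabssum.add hBiabssum
          calc ∑' j, |Fi j| ≤ ∑' j, (|Ai j| + |Bi j|) :=
                Summable.tsum_le_tsum hFile (summable_abs_iff.mpr hFs) hsum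
            _ = ∑' j, |Ai j| + ∑' j, |Bi j| := Summable.tsum_add hAiabssum hBiabssum
            _ ≤ Sv * R + K * R := add_le_add hAiabs_tsum hBiabs_tsum
        calc |∑' j, Fi j| ≤ ∑' j, |Fi j| := habs
          _ ≤ Sv * R + K * R := hFi_tsum
          _ = (Sv + K) * R := by ring
      · rw [tsum_eq_zero_of_not_summable hFs, abs_zero]
        exact mul_nonneg (by linarith) hRnn
    -- the i = 1 term
    have hL1 : L 1 ≤ (a 1 * Q 1 + Sv + 2 * K) * R := by
      have hbd1 : BDLop a Q h 1 = (-(Fv a Q h 1) - ∑' j, Fi j) / Q 1 := by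
        rw [BDLop_one a Q h, hFidef]
      have hLe : L 1 = |(-(Fv a Q h 1) - ∑' j, Fi j)| := by
        simp only [hLdef]
        rw [hbd1, abs_div, abs_of_pos hQ1, Nat.cast_one, Real.one_rpow]
        field_simp
      have htri : |(-(Fv a Q h 1) - ∑' j, Fi j)| ≤ |Fv a Q h 1| + |∑' j, Fi j| := by
        rw [show -(Fv a Q h 1) - ∑' j, Fi j = -(Fv a Q h 1 + ∑' j, Fi j) by ring, abs_neg]
        exact abs_add_le _ _
      have hF1 : |Fv a Q h 1| ≤ |Av a Q h 1| + |Bv a Q h 1| := by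
        rw [Fv_split]; exact abs_add_le _ _
      have hA1 : |Av a Q h 1| ≤ a 1 * Q 1 * R := by
        rw [show Av a Q h 1 = (a 1 * Q 1) * (Q 1 * h 1) by simp only [Av]; ring,
          abs_mul, abs_of_pos ha1Q1, abs_mul, abs_of_pos hQ1]
        exact mul_le_mul_of_nonneg_left hQ1h1 ha1Q1.le
      have hB1 : |Bv a Q h 1| ≤ K * R := by
        have e : GB 1 = |Bv a Q h 1| := by
          simp only [hGBdef]
          rw [if_pos le_rfl, Nat.cast_one, Real.one_rpow, one_mul]
        have := Summable.le_tsum hGBsum 1 (fun j _ => hGBnn j)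
        rw [e] at this
        linarith [hGBtsum]
      rw [hLe]
      calc |(-(Fv a Q h 1) - ∑' j, Fi j)| ≤ |Fv a Q h 1| + |∑' j, Fi j| := htri
        _ ≤ (|Av a Q h 1| + |Bv a Q h 1|) + (Sv + K) * R := add_le_add hF1 hTbound
        _ ≤ (a 1 * Q 1 * R + K * R) + (Sv + K) * R := by
            have := add_le_add hA1 hB1
            linarith
        _ = (a 1 * Q 1 + Sv + 2 * K) * R := by ring
    -- assembly
    set c1 : ℝ := (a 1 * Q 1 + Sv + 2 * K) * R with hc1def
    set Mf : ℕ → ℝ := fun i => (if i = 1 then c1 else 0) + (GA i + (GB1 i + GBe i)) with hMdef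
    have hM1sum : Summable (fun i : ℕ => if i = 1 then c1 else 0) :=
      (hasSum_ite_eq 1 c1).summable
    have hMsum : Summable Mf := hM1sum.add (hGAfacts.1.add (hGB1sum.add hGBesum))
    have hLM : ∀ i, L i ≤ Mf i := by
      intro i
      rcases Nat.lt_or_ge i 2 with hi | hi
      · interval_cases i
        · have e : Mf 0 = 0 := by
            simp only [hMdef, hGAdef, hGB1def, hGBedef]
            norm_num
          rw [hL0, e]
        · have e : Mf 1 = c1 := by
            simp only [hMdef, hGAdef, hGB1def, hGBedef]
            norm_num
          rw [e]
          exact hL1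
      · have hLi := hL2 i hi
        have hxnn : 0 ≤ (i:ℝ) ^ (1 + m) := Real.rpow_nonneg (Nat.cast_nonneg i) _
        have hsplit : Fv a Q h (i - 1) - Fv a Q h i =
            (Av a Q h (i - 1) - Av a Q h i) + (Bv a Q h (i - 1) - Bv a Q h i) := by
          rw [Fv_split, Fv_split]; ring
        have htri : |Fv a Q h (i - 1) - Fv a Q h i| ≤
            |Av a Q h (i - 1) - Av a Q h i| + (|Bv a Q h (i - 1)| + |Bv a Q h i|) := by
          rw [hsplit]
          refine le_trans (abs_add_le _ _) ?_
          exact add_le_add le_rfl (abs_sub _ _)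
        have hMi : Mf i = (i:ℝ) ^ (1 + m) * |Av a Q h (i - 1) - Av a Q h i| +
            ((i:ℝ) ^ (1 + m) * |Bv a Q h (i - 1)| + (i:ℝ) ^ (1 + m) * |Bv a Q h i|) := by
          simp only [hMdef, hGAdef, hGB1def, hGBedef]
          rw [if_neg (by omega : ¬ i = 1), if_pos hi, if_pos hi, if_pos hi, zero_add]
        rw [hMi, hLi]
        calc (i:ℝ) ^ (1 + m) * |Fv a Q h (i - 1) - Fv a Q h i| ≤
              (i:ℝ) ^ (1 + m) * (|Av a Q h (i - 1) - Av a Q h i| +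
                (|Bv a Q h (i - 1)| + |Bv a Q h i|)) :=
              mul_le_mul_of_nonneg_left htri hxnn
          _ = (i:ℝ) ^ (1 + m) * |Av a Q h (i - 1) - Av a Q h i| +
              ((i:ℝ) ^ (1 + m) * |Bv a Q h (i - 1)| + (i:ℝ) ^ (1 + m) * |Bv a Q h i|) := by
              ring
    have hmain : ∑' i, L i ≤ ∑' i, Mf i := Summable.tsum_le_tsum hLM hLS hMsum
    have hMtsum : ∑' i, Mf i =
        c1 + (∑' i, GA i + (∑' i, GB1 i + ∑' i, GBe i)) := by
      rw [hMdef]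
      rw [Summable.tsum_add hM1sum (hGAfacts.1.add (hGB1sum.add hGBesum)),
        Summable.tsum_add hGAfacts.1 (hGB1sum.add hGBesum), Summable.tsum_add hGB1sum hGBesum,
        (hasSum_ite_eq 1 c1).tsum_eq]
    have hGB1fin : ∑' i, GB1 i ≤ (2:ℝ) ^ (1 + m) * (K * R) := by
      have := mul_le_mul_of_nonneg_left hGBtsum h2m.le
      linarith [hGB1tsum]
    have hGBefin : ∑' i, GBe i ≤ K * R := le_trans hGBetsum hGBtsum
    have hfinal : ∑' i, L i ≤
        (a 1 * Q 1 + Sv + Dv + (3 + (2:ℝ) ^ (1 + m)) * K) * R := by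
      rw [hMtsum] at hmain
      have hGAfin := hGAfacts.2
      have e : c1 + (Dv * R + ((2:ℝ) ^ (1 + m) * (K * R) + K * R)) =
          (a 1 * Q 1 + Sv + Dv + (3 + (2:ℝ) ^ (1 + m)) * K) * R := by
        rw [hc1def]; ring
      linarith
    calc ∑' i, L i ≤ (a 1 * Q 1 + Sv + Dv + (3 + (2:ℝ) ^ (1 + m)) * K) * R := hfinal
      _ ≤ (1 + a 1 * Q 1 + Sv + Dv + (3 + (2:ℝ) ^ (1 + m)) * K) * R :=
          mul_le_mul_of_nonneg_right (by linarith) hRnn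
  · rw [tsum_eq_zero_of_not_summable hLS]
    have h3K : 0 < (3 + (2:ℝ) ^ (1 + m)) * K := mul_pos (by linarith) hKpos
    have hCm : 0 < 1 + a 1 * Q 1 + Sv + Dv + (3 + (2:ℝ) ^ (1 + m)) * K := by linarith
    exact mul_nonneg hCm.le hRnn
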